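/- If a time-invariant input-output operator H is incrementally passive, then it is δ-passive with bound 0: for continuously differentiable input-output pairs (u, y = Hu), ∫_0^T u̇(t)ᵀ ẏ(t) dt ≥ 0 for all T > 0. (Proof by applying incremental passivity to u and its time-shift u(· − τ), expanding to second order in τ, dividing by τ², and letting τ → 0.) -/

import Mathlib

set_option maxHeartbeats 1000000


open MeasureTheory Filter Topology

def dot {n : ℕ} (a b : Fin n → ℝ) : ℝ := ∑ i, a i * b i

lemma dot_continuous {n : ℕ} :
    Continuous fun p : (Fin n → ℝ) × (Fin n → ℝ) => dot p.1 p.2 := by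
  unfold dot
  exact continuous_finset_sum _ fun i _ =>
    ((continuous_apply i).comp continuous_fst).mul ((continuous_apply i).comp continuous_snd)

lemma dot_smul_smul {n : ℕ} (c : ℝ) (a b : Fin n → ℝ) :
    dot (c • a) (c • b) = c ^ 2 * dot a b := by
  unfold dot
  rw [Finset.mul_sum]
  refine Finset.sum_congr rfl fun i _ => ?_
  simp [Pi.smul_apply]
  ring

lemma abs_dot_le {n : ℕ} (a b : Fin n → ℝ) : |dot a b| ≤ n * ‖a‖ * ‖b‖ := by
  unfold dot
  calc |∑ i, a i * b i| ≤ ∑ i, |a i * b i| := Finset.abs_sum_le_sum_abs _ _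
    _ ≤ ∑ _i : Fin n, ‖a‖ * ‖b‖ := by
        refine Finset.sum_le_sum fun i _ => ?_
        rw [abs_mul]
        have ha : |a i| ≤ ‖a‖ := by
          have := norm_le_pi_norm a i
          simpa [Real.norm_eq_abs] using this
        have hb : |b i| ≤ ‖b‖ := by
          have := norm_le_pi_norm b i
          simpa [Real.norm_eq_abs] using this
        exact mul_le_mul ha hb (abs_nonneg _) (norm_nonneg _)
    _ = n * ‖a‖ * ‖b‖ := by
        simp [Finset.sum_const, mul_assoc]

/-- a time-invariant incrementally passive operator is δ-passive
with bound 0 on smooth input-output pairs. -/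
theorem incremental_passive_implies_delta_passive
    {n : ℕ} (U : Set (ℝ → Fin n → ℝ))
    (H : (ℝ → Fin n → ℝ) → (ℝ → Fin n → ℝ))
    -- time invariance: shifts of admissible inputs are admissible and H commutes with shifts
    (hshift : ∀ u ∈ U, ∀ τ : ℝ, (fun t => u (t - τ)) ∈ U ∧
      H (fun t => u (t - τ)) = fun t => H u (t - τ))
    -- incremental passivity
    (hinc : ∀ u ∈ U, ∀ v ∈ U, ∀ T > (0:ℝ),
      0 ≤ ∫ t in (0:ℝ)..T, dot (H u t - H v t) (u t - v t))
    -- a C² admissible input-output pair (u, y = Hu) with derivatives u', y'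
    (u : ℝ → Fin n → ℝ) (hu : u ∈ U)
    (u' y' : ℝ → Fin n → ℝ)
    (hu' : ∀ t, HasDerivAt u (u' t) t) (hu'' : ContDiff ℝ 1 u')
    (hy' : ∀ t, HasDerivAt (H u) (y' t) t) (hy'' : ContDiff ℝ 1 y') :
    ∀ T > (0:ℝ), 0 ≤ ∫ t in (0:ℝ)..T, dot (u' t) (y' t) := by
  intro T hT
  set y : ℝ → Fin n → ℝ := H u with hy
  have hucont : Continuous u := continuous_iff_continuousAt.2 fun t => (hu' t).continuousAt
  have hycont : Continuous y := continuous_iff_continuousAt.2 fun t => (hy' t).continuousAt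
  have hu'c : Continuous u' := hu''.continuous
  have hy'c : Continuous y' := hy''.continuous
  obtain ⟨Mu, hMu⟩ := (isCompact_Icc (a := (-1:ℝ)) (b := T+1)).exists_bound_of_continuousOn
    hu'c.continuousOn
  obtain ⟨My, hMy⟩ := (isCompact_Icc (a := (-1:ℝ)) (b := T+1)).exists_bound_of_continuousOn
    hy'c.continuousOn
  have hMu0 : 0 ≤ Mu := le_trans (norm_nonneg _) (hMu 0 ⟨by linarith, by linarith⟩)
  have hMy0 : 0 ≤ My := le_trans (norm_nonneg _) (hMy 0 ⟨by linarith, by linarith⟩)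
  set F : ℝ → ℝ → ℝ :=
    fun τ t => dot (τ⁻¹ • (y t - y (t - τ))) (τ⁻¹ • (u t - u (t - τ))) with hFdef
  -- MVT-type bound on difference quotients via FTC
  have key : ∀ (g g' : ℝ → Fin n → ℝ), (∀ s, HasDerivAt g (g' s) s) → Continuous g' →
      ∀ M : ℝ, (∀ s ∈ Set.Icc (-1:ℝ) (T+1), ‖g' s‖ ≤ M) →
      ∀ t ∈ Set.Ioc (0:ℝ) T, ∀ τ : ℝ, τ ≠ 0 → |τ| ≤ 1 →
      ‖τ⁻¹ • (g t - g (t - τ))‖ ≤ M := by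
    intro g g' hg hg'c M hM t ht τ hτ hτ1
    have habs := abs_le.mp hτ1
    have hftc : ∫ s in (t - τ)..t, g' s = g t - g (t - τ) :=
      intervalIntegral.integral_eq_sub_of_hasDerivAt (fun x _ => hg x)
        (hg'c.intervalIntegrable _ _)
    have hbd : ‖∫ s in (t - τ)..t, g' s‖ ≤ M * |t - (t - τ)| := by
      apply intervalIntegral.norm_integral_le_of_norm_le_const
      intro x hx
      have hx' : x ∈ Set.Icc (min (t - τ) t) (max (t - τ) t) :=
        Set.Ioc_subset_Icc_self hx
      have h1 : min (t - τ) t ≤ x := hx'.1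
      have h2 : x ≤ max (t - τ) t := hx'.2
      have hmin : (-1:ℝ) ≤ min (t - τ) t := by
        simp only [le_min_iff]
        constructor <;> linarith [ht.1]
      have hmax : max (t - τ) t ≤ T + 1 := by
        simp only [max_le_iff]
        constructor <;> linarith [ht.2]
      exact hM x ⟨by linarith, by linarith⟩
    rw [norm_smul]
    rw [hftc] at hbd
    have : |t - (t - τ)| = |τ| := by ring_nf
    rw [this] at hbd
    have hτpos : 0 < |τ| := abs_pos.mpr hτ
    rw [Real.norm_eq_abs, abs_inv]
    calc |τ|⁻¹ * ‖g t - g (t - τ)‖ ≤ |τ|⁻¹ * (M * |τ|) :=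
          mul_le_mul_of_nonneg_left hbd (by positivity)
      _ = M := by field_simp
  -- nonnegativity of the quotient integrals
  have hGnonneg : ∀ τ : ℝ, 0 ≤ ∫ t in (0:ℝ)..T, F τ t := by
    intro τ
    obtain ⟨hvU, hHv⟩ := hshift u hu τ
    have h0 := hinc u hu _ hvU T hT
    rw [hHv] at h0
    have heq : (fun t => F τ t) =
        fun t => (τ⁻¹) ^ 2 * dot (y t - y (t - τ)) (u t - u (t - τ)) :=
      funext fun t => dot_smul_smul _ _ _
    rw [heq, intervalIntegral.integral_const_mul]
    exact mul_nonneg (sq_nonneg _) (by simpa using h0)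
  -- dominated convergence
  have hconv : Tendsto (fun τ => ∫ t in (0:ℝ)..T, F τ t) (𝓝[≠] (0:ℝ))
      (𝓝 (∫ t in (0:ℝ)..T, dot (y' t) (u' t))) := by
    apply intervalIntegral.tendsto_integral_filter_of_dominated_convergence
      (fun _ => (n : ℝ) * My * Mu)
    · -- measurability
      refine Eventually.of_forall fun τ => ?_
      have hA : Continuous fun t => τ⁻¹ • (y t - y (t - τ)) :=
        (hycont.sub (hycont.comp (continuous_id.sub continuous_const))).const_smul τ⁻¹
      have hB : Continuous fun t => τ⁻¹ • (u t - u (t - τ)) :=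
        (hucont.sub (hucont.comp (continuous_id.sub continuous_const))).const_smul τ⁻¹
      exact (dot_continuous.comp (hA.prodMk hB)).aestronglyMeasurable
    · -- bound
      have h1 : ∀ᶠ τ in 𝓝[≠] (0:ℝ), |τ| ≤ 1 := by
        apply Filter.Eventually.filter_mono nhdsWithin_le_nhds
        filter_upwards [Metric.ball_mem_nhds (0:ℝ) one_pos] with τ hτ
        rw [Metric.mem_ball, Real.dist_eq, sub_zero] at hτ
        exact hτ.le
      filter_upwards [h1, self_mem_nhdsWithin] with τ hτ1 hτ0
      refine Eventually.of_forall fun t ht => ?_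
      rw [Set.uIoc_of_le hT.le] at ht
      have hτ0' : τ ≠ 0 := hτ0
      have hby := key y y' hy' hy'c My hMy t ht τ hτ0' hτ1
      have hbu := key u u' hu' hu'c Mu hMu t ht τ hτ0' hτ1
      calc ‖F τ t‖ = |dot (τ⁻¹ • (y t - y (t - τ))) (τ⁻¹ • (u t - u (t - τ)))| := rfl
        _ ≤ n * ‖τ⁻¹ • (y t - y (t - τ))‖ * ‖τ⁻¹ • (u t - u (t - τ))‖ := abs_dot_le _ _
        _ ≤ (n : ℝ) * My * Mu := by
            apply mul_le_mul _ hbu (norm_nonneg _) (by positivity)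
            exact mul_le_mul_of_nonneg_left hby (Nat.cast_nonneg n)
    · exact intervalIntegrable_const
    · -- pointwise limit
      refine Eventually.of_forall fun t _ => ?_
      have slopeConv : ∀ (g : ℝ → Fin n → ℝ) (d : Fin n → ℝ), HasDerivAt g d t →
          Tendsto (fun τ => τ⁻¹ • (g t - g (t - τ))) (𝓝[≠] (0:ℝ)) (𝓝 d) := by
        intro g d hd
        have h1 : Tendsto (fun τ : ℝ => t - τ) (𝓝[≠] (0:ℝ)) (𝓝[≠] t) := by
          rw [tendsto_nhdsWithin_iff]
          constructor
          · have h : Tendsto (fun τ : ℝ => t - τ) (𝓝 (0:ℝ)) (𝓝 (t - 0)) :=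
              tendsto_const_nhds.sub tendsto_id
            simpa using h.mono_left nhdsWithin_le_nhds
          · filter_upwards [self_mem_nhdsWithin] with τ hτ
            simp only [Set.mem_compl_iff, Set.mem_singleton_iff] at hτ ⊢
            intro h
            exact hτ (by linarith)
        have h2 := (hasDerivAt_iff_tendsto_slope.mp hd).comp h1
        refine h2.congr fun τ => ?_
        show slope g t (t - τ) = τ⁻¹ • (g t - g (t - τ))
        rw [slope_def_module]
        rw [show t - τ - t = -τ by ring, inv_neg, neg_smul, ← smul_neg, neg_sub]
      have hpair := ((slopeConv y (y' t) (hy' t)).prodMk_nhds (slopeConv u (u' t) (hu' t)))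
      have hmain := (dot_continuous.tendsto (y' t, u' t)).comp hpair
      exact hmain.congr fun τ => rfl
  -- conclude
  have hfinal : 0 ≤ ∫ t in (0:ℝ)..T, dot (y' t) (u' t) :=
    ge_of_tendsto hconv (Eventually.of_forall fun τ => hGnonneg τ)
  have hsymm : (fun t => dot (u' t) (y' t)) = fun t => dot (y' t) (u' t) := by
    funext t
    unfold dot
    exact Finset.sum_congr rfl fun i _ => mul_comm _ _
  rw [show (∫ t in (0:ℝ)..T, dot (u' t) (y' t)) = ∫ t in (0:ℝ)..T, dot (y' t) (u' t) from by
    rw [hsymm]]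
  exact hfinal
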